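/- arXiv:1510.09106 — 3 statements merged into one kernel-verified Lean document; each statement's English description precedes it below -/
import Mathlib

section
/- For 0 < α₁ < α₂ < 1, the function g(x) = (-ln x)^(α₂-α₁) · exp((-ln x)^(α₁) - (-ln x)^(α₂)) is strictly decreasing on the interval (1/e, 1). -/
open Real

lemma h_strictMono (α₁ α₂ : ℝ) (h₀ : 0 < α₁) (h₁₂ : α₁ < α₂) (h₂ : α₂ < 1) :
    StrictMonoOn (fun t : ℝ => t ^ (α₂ - α₁) * Real.exp (t ^ α₁ - t ^ α₂))
      (Set.Ioo 0 1) := by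
  have hb : 0 < α₂ - α₁ := sub_pos.mpr h₁₂
  apply strictMonoOn_of_deriv_pos (convex_Ioo 0 1)
  · apply ContinuousOn.mul
    · exact continuousOn_id.rpow_const fun x hx => Or.inl hx.1.ne'
    · apply Real.continuous_exp.comp_continuousOn
      exact (continuousOn_id.rpow_const fun x hx => Or.inl hx.1.ne').sub
        (continuousOn_id.rpow_const fun x hx => Or.inl hx.1.ne')
  · intro t ht
    rw [interior_Ioo] at ht
    obtain ⟨ht0, ht1⟩ := ht
    set E := Real.exp (t ^ α₁ - t ^ α₂) with hE
    have h1 : HasDerivAt (fun t : ℝ => t ^ (α₂ - α₁)) ((α₂ - α₁) * t ^ (α₂ - α₁ - 1)) t :=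
      Real.hasDerivAt_rpow_const (Or.inl ht0.ne')
    have h2 : HasDerivAt (fun t : ℝ => t ^ α₁) (α₁ * t ^ (α₁ - 1)) t :=
      Real.hasDerivAt_rpow_const (Or.inl ht0.ne')
    have h3 : HasDerivAt (fun t : ℝ => t ^ α₂) (α₂ * t ^ (α₂ - 1)) t :=
      Real.hasDerivAt_rpow_const (Or.inl ht0.ne')
    have hEexp : HasDerivAt (fun t : ℝ => Real.exp (t ^ α₁ - t ^ α₂))
        (E * (α₁ * t ^ (α₁ - 1) - α₂ * t ^ (α₂ - 1))) t := (h2.sub h3).exp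
    have H : HasDerivAt (fun t : ℝ => t ^ (α₂ - α₁) * Real.exp (t ^ α₁ - t ^ α₂))
        ((α₂ - α₁) * t ^ (α₂ - α₁ - 1) * E +
          t ^ (α₂ - α₁) * (E * (α₁ * t ^ (α₁ - 1) - α₂ * t ^ (α₂ - 1)))) t := h1.mul hEexp
    rw [H.deriv]
    have e1 : t ^ (α₂ - α₁) * t ^ (α₁ - 1) = t ^ (α₂ - α₁ - 1) * t ^ α₁ := by
      rw [← Real.rpow_add ht0, ← Real.rpow_add ht0]; ring_nf
    have e2 : t ^ (α₂ - α₁) * t ^ (α₂ - 1) = t ^ (α₂ - α₁ - 1) * t ^ α₂ := by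
      rw [← Real.rpow_add ht0, ← Real.rpow_add ht0]; ring_nf
    have key : (α₂ - α₁) * t ^ (α₂ - α₁ - 1) * E +
        t ^ (α₂ - α₁) * (E * (α₁ * t ^ (α₁ - 1) - α₂ * t ^ (α₂ - 1))) =
        E * t ^ (α₂ - α₁ - 1) * ((α₂ - α₁) + α₁ * t ^ α₁ - α₂ * t ^ α₂) := by
      linear_combination E * α₁ * e1 - E * α₂ * e2
    rw [key]
    have hEpos : 0 < E := Real.exp_pos _
    have htp : 0 < t ^ (α₂ - α₁ - 1) := Real.rpow_pos_of_pos ht0 _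
    have hlt : t ^ α₂ < t ^ α₁ := Real.rpow_lt_rpow_of_exponent_gt ht0 ht1 h₁₂
    have hlt1 : t ^ α₂ < 1 := Real.rpow_lt_one ht0.le ht1 (h₀.trans h₁₂)
    have hp1 : 0 < t ^ α₁ := Real.rpow_pos_of_pos ht0 _
    have hbr : 0 < (α₂ - α₁) + α₁ * t ^ α₁ - α₂ * t ^ α₂ := by nlinarith
    positivity

/-- For `0 < α₁ < α₂ < 1`, the function
`g x = (-log x)^(α₂-α₁) * exp ((-log x)^α₁ - (-log x)^α₂)` is strictly decreasing
on the interval `(1/e, 1)`. -/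
theorem g_strictAnti (α₁ α₂ : ℝ) (h₀ : 0 < α₁) (h₁₂ : α₁ < α₂) (h₂ : α₂ < 1) :
    StrictAntiOn
      (fun x : ℝ => (-Real.log x) ^ (α₂ - α₁) *
        Real.exp ((-Real.log x) ^ α₁ - (-Real.log x) ^ α₂))
      (Set.Ioo (1 / Real.exp 1) 1) := by
  have hmem : ∀ x ∈ Set.Ioo (1 / Real.exp 1) 1, -Real.log x ∈ Set.Ioo (0 : ℝ) 1 := by
    intro x hx
    have hx0 : (0 : ℝ) < x := lt_trans (show (0:ℝ) < 1 / Real.exp 1 by positivity) hx.1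
    constructor
    · have := Real.log_neg hx0 hx.2
      linarith
    · have h' : Real.exp (-1) < x := by
        rw [Real.exp_neg, ← one_div]; exact hx.1
      have := (Real.lt_log_iff_exp_lt hx0).mpr h'
      linarith
  intro x hx y hy hxy
  have hx0 : (0 : ℝ) < x := lt_trans (show (0:ℝ) < 1 / Real.exp 1 by positivity) hx.1
  have hlog : Real.log x < Real.log y := Real.log_lt_log hx0 hxy
  exact h_strictMono α₁ α₂ h₀ h₁₂ h₂ (hmem y hy) (hmem x hx) (by linarith)
end

section
/- Let w : [0,1] → ℝ be continuously differentiable on an interval, with w' strictly increasing and twice differentiable on (m,1), satisfying w''(x)/w'(x) < 1/(1-x) and w'(x), w''(x) > 0 for x ∈ (m,1). For d > 0 let X(d) ∈ (m,1) satisfy w'(X(d)) = d·c/L for constants c, L > 0. Then the function φ(d) = d·(1 - X(d)) is strictly decreasing in d (on the range of d for which X(d) is defined). -/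
/-- Under the curvature condition `w''/w' < 1/(1-x)` on `(m,1)` (with `w', w'' > 0`
and `w'` strictly increasing there), the function `φ(d) = d * (1 - X d)` is strictly
decreasing in `d`, where `X d ∈ (m,1)` is defined by the first-order condition
`w'(X d) = d * c / L`. -/
theorem phi_strictAnti (w' w'' : ℝ → ℝ) (m c L : ℝ) (hm : m ∈ Set.Ioo (0 : ℝ) 1)
    (hc : 0 < c) (hL : 0 < L)
    (hderiv : ∀ x ∈ Set.Ioo m 1, HasDerivAt w' (w'' x) x)
    (hw'pos : ∀ x ∈ Set.Ioo m 1, 0 < w' x)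
    (hw''pos : ∀ x ∈ Set.Ioo m 1, 0 < w'' x)
    (hcurv : ∀ x ∈ Set.Ioo m 1, w'' x / w' x < 1 / (1 - x))
    (hmono : StrictMonoOn w' (Set.Ioo m 1))
    (D : Set ℝ) (hD : D ⊆ Set.Ioi (0 : ℝ))
    (X : ℝ → ℝ)
    (hX : ∀ d ∈ D, X d ∈ Set.Ioo m 1 ∧ w' (X d) = d * c / L) :
    StrictAntiOn (fun d => d * (1 - X d)) D := by
  set g : ℝ → ℝ := fun x => w' x * (1 - x) with hg
  have hgderiv : ∀ x ∈ Set.Ioo m 1, HasDerivAt g (w'' x * (1 - x) - w' x) x := by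
    intro x hx
    have h1 : HasDerivAt (fun y : ℝ => (1 - y)) (-1) x := by
      simpa using (hasDerivAt_id x).const_sub 1
    have := (hderiv x hx).mul h1
    have e : g = w' * fun y => 1 - y := by funext y; simp [hg]
    rw [e]
    exact this.congr_deriv (by ring)
  have hgneg : ∀ x ∈ Set.Ioo m 1, w'' x * (1 - x) - w' x < 0 := by
    intro x hx
    have h1x : 0 < 1 - x := by linarith [hx.2]
    have hw := hw'pos x hx
    have := hcurv x hx
    have h2 : w'' x * (1 - x) < w' x := by
      rw [div_lt_div_iff₀ hw h1x] at this
      linarith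
    linarith
  have hganti : StrictAntiOn g (Set.Ioo m 1) := by
    apply StrictAntiOn.mono (s := Set.Ioo m 1)
      (strictAntiOn_of_deriv_neg (convex_Ioo m 1)
        (fun x hx => (hgderiv x hx).continuousAt.continuousWithinAt)
        (fun x hx => ?_)) (le_refl _)
    rw [interior_Ioo] at hx
    rw [(hgderiv x hx).deriv]
    exact hgneg x hx
  intro d1 h1 d2 h2 h12
  obtain ⟨hX1, he1⟩ := hX d1 h1
  obtain ⟨hX2, he2⟩ := hX d2 h2
  have hd1 := hD h1
  have hlt : w' (X d1) < w' (X d2) := by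
    rw [he1, he2]
    gcongr
  have hXlt : X d1 < X d2 := (hmono.lt_iff_lt hX1 hX2).mp hlt
  have key : w' (X d2) * (1 - X d2) < w' (X d1) * (1 - X d1) := hganti hX1 hX2 hXlt
  rw [he1, he2] at key
  have hcL : (0:ℝ) < c / L := div_pos hc hL
  have key' : d2 * (1 - X d2) * (c / L) < d1 * (1 - X d1) * (c / L) := by
    ring_nf at key ⊢
    linarith
  exact lt_of_mul_lt_mul_right key' hcL.le
end

section
/- In a Weakest Link game on a connected graph with homogeneous players, every pure Nash equilibrium has all nodes making identical investments. Precisely: if each player's utility is u(sᵢ, s_{N(i)}) = -L·w(1 - min_{j ∈ N̄(i)} sⱼ) - c·sᵢ with c > 0, and s* is a pure Nash equilibrium, then sᵢ* = sⱼ* for all nodes i, j. -/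
open Finset

/-- In a Weakest Link game on a connected graph with homogeneous players, every
pure Nash equilibrium has all nodes making identical investments. -/
theorem weakest_link_identical (n : ℕ) (G : SimpleGraph (Fin n)) [DecidableRel G.Adj]
    (hconn : G.Connected)
    (w : ℝ → ℝ) (c L : ℝ) (hc : 0 < c) (hL : 0 < L)
    (u : Fin n → (Fin n → ℝ) → ℝ)
    (hu : ∀ i (s : Fin n → ℝ),
      u i s = -L * w (1 - (insert i (G.neighborFinset i)).inf'
        (insert_nonempty i (G.neighborFinset i)) s) - c * s i)
    (s : Fin n → ℝ) (hs : ∀ i, s i ∈ Set.Icc (0 : ℝ) 1)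
    (hpne : ∀ i, ∀ si ∈ Set.Icc (0 : ℝ) 1, u i (Function.update s i si) ≤ u i s) :
    ∀ i j, s i = s j := by
  -- s i equals the min over the closed neighborhood
  have hmin : ∀ i, s i = (insert i (G.neighborFinset i)).inf'
      (insert_nonempty i (G.neighborFinset i)) s := by
    intro i
    set N := insert i (G.neighborFinset i) with hN
    set m := N.inf' (insert_nonempty i (G.neighborFinset i)) s with hm
    have hmi : m ≤ s i := inf'_le _ (mem_insert_self i _)
    have hmIcc : m ∈ Set.Icc (0 : ℝ) 1 := by
      obtain ⟨j, hj, hjeq⟩ := exists_mem_eq_inf' (insert_nonempty i (G.neighborFinset i)) s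
      rw [hm, hjeq]; exact hs j
    -- the min of the updated profile is still m
    have hupd : N.inf' (insert_nonempty i (G.neighborFinset i))
        (Function.update s i m) = m := by
      apply le_antisymm
      · calc N.inf' _ (Function.update s i m) ≤ Function.update s i m i :=
              inf'_le _ (mem_insert_self i _)
          _ = m := Function.update_self i m s
      · apply le_inf'
        intro j hj
        by_cases h : j = i
        · subst h; simp
        · rw [Function.update_of_ne h]
          exact inf'_le _ hj
    have := hpne i m hmIcc
    rw [hu i (Function.update s i m), hu i s, hupd, Function.update_self] at this
    have hle : c * s i ≤ c * m := by linarith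
    have : s i ≤ m := le_of_mul_le_mul_left hle hc
    linarith
  -- adjacent nodes have equal investments
  have hadj : ∀ a b, G.Adj a b → s a = s b := by
    have step : ∀ a b, G.Adj a b → s a ≤ s b := by
      intro a b hab
      calc s a = _ := hmin a
        _ ≤ s b := inf'_le _ (mem_insert_of_mem (by
              rw [SimpleGraph.mem_neighborFinset]; exact hab))
    exact fun a b hab => le_antisymm (step a b hab) (step b a hab.symm)
  intro i j
  obtain ⟨p⟩ := hconn i j
  induction p with
  | nil => rfl
  | cons h p ih => rw [hadj _ _ h]; exact ih
end
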